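/- Let (X,r) be a left nondegenerate idempotent braided set with X finite of cardinality n ≥ 2, and fix an element x₁ ∈ X. Then for every d ≥ 1 and every word w of length d in the free monoid on X, there is a unique x ∈ X such that [w] = [x₁^{d−1}x] in the Yang–Baxter monoid S(X,r). Consequently, for every d ≥ 1 the set S_d of classes of words of length d has exactly n elements, and for any field k the Yang–Baxter algebra A(k,X,r) has Hilbert function dim_k A_d = n for all d ≥ 1, i.e., Hilbert series (1 + (n−1)t)/(1−t). -/

import Mathlib

/-- `r` applied to the first two factors of `X × X × X`. -/
def rOneMap {X : Type*} (r : X × X → X × X) : X × X × X → X × X × X :=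
  fun p => ((r (p.1, p.2.1)).1, (r (p.1, p.2.1)).2, p.2.2)

/-- `r` applied to the last two factors of `X × X × X`. -/
def rTwoMap {X : Type*} (r : X × X → X × X) : X × X × X → X × X × X :=
  fun p => (p.1, (r (p.2.1, p.2.2)).1, (r (p.2.1, p.2.2)).2)

/-- `(X, r)` is a braided set (set-theoretic solution of the Yang–Baxter equation). -/
def IsBraided {X : Type*} (r : X × X → X × X) : Prop :=
  rOneMap r ∘ rTwoMap r ∘ rOneMap r = rTwoMap r ∘ rOneMap r ∘ rTwoMap r

/-- The defining relations of the Yang–Baxter monoid: `xy ~ x'y'` whenever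
`r (x, y) = (x', y')`. -/
def ybRel {X : Type*} (r : X × X → X × X) : FreeMonoid X → FreeMonoid X → Prop :=
  fun a b => ∃ x y : X,
    a = FreeMonoid.of x * FreeMonoid.of y ∧
    b = FreeMonoid.of (r (x, y)).1 * FreeMonoid.of (r (x, y)).2

/-- The congruence on the free monoid on `X` generated by the Yang–Baxter relations;
the Yang–Baxter monoid `S(X, r)` is its quotient. -/
def ybCon {X : Type*} (r : X × X → X × X) : Con (FreeMonoid X) := conGen (ybRel r)

/-- Auxiliary monoid used to build an invariant of the Yang–Baxter congruence. -/
structure YBAux (X : Type*) where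
  f : X → X
  o : Option X

namespace YBAux
variable {X : Type*}

instance : Monoid (YBAux X) where
  one := ⟨id, none⟩
  mul a b := ⟨a.f ∘ b.f, b.o.elim a.o (fun y => some (a.f y))⟩
  mul_assoc a b c := by
    rcases c with ⟨cf, _ | cz⟩ <;> rcases b with ⟨bf, _ | bz⟩ <;> rfl
  one_mul b := by rcases b with ⟨bf, _ | bz⟩ <;> rfl
  mul_one a := rfl

@[simp] lemma mul_f (a b : YBAux X) : (a * b).f = a.f ∘ b.f := rfl
@[simp] lemma mul_o (a b : YBAux X) : (a * b).o = b.o.elim a.o (fun y => some (a.f y)) := rfl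
@[simp] lemma one_f : (1 : YBAux X).f = id := rfl

lemma pow_f_inj (a : YBAux X) (ha : Function.Injective a.f) (e : ℕ) :
    Function.Injective ((a ^ e).f) := by
  induction e with
  | zero => simpa using Function.injective_id
  | succ e ih =>
    rw [pow_succ]
    exact ih.comp ha

end YBAux

section YB
variable {X : Type*} (r : X × X → X × X)

/-- The invariant homomorphism. -/
def ybPsi : FreeMonoid X →* YBAux X :=
  FreeMonoid.lift (fun x => ⟨fun y => (r (x, y)).1, some x⟩)

lemma ybPsi_of (x : X) : ybPsi r (FreeMonoid.of x) = ⟨fun y => (r (x, y)).1, some x⟩ :=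
  FreeMonoid.lift_eval_of _ _

variable {r}

lemma yb_fix (hidem : r ∘ r = r) (p : X × X) : r (r p) = r p := congrFun hidem p

lemma yb_rawB1 (hbr : IsBraided r) (x y z : X) :
    (r ((r (x, y)).1, (r ((r (x, y)).2, z)).1)).1 = (r (x, (r (y, z)).1)).1 := by
  have h := congrFun hbr (x, y, z)
  simp only [Function.comp_apply, rOneMap, rTwoMap] at h
  have h2 := congrArg Prod.fst h
  exact h2

lemma yb_snd (hlnd : ∀ x : X, Function.Bijective fun y => (r (x, y)).1)
    (hidem : r ∘ r = r) {p q : X × X} (h : (r p).1 = (r q).1) :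
    (r p).2 = (r q).2 := by
  have hp := congrArg Prod.fst (yb_fix hidem p)
  have hq := congrArg Prod.fst (yb_fix hidem q)
  -- hp : (r (r p)).1 = (r p).1
  apply (hlnd (r p).1).1
  show (r ((r p).1, (r p).2)).1 = (r ((r p).1, (r q).2)).1
  rw [Prod.mk.eta, hp, h]
  rw [Prod.mk.eta]
  exact hq.symm

lemma ybPsi_con (hbr : IsBraided r) (hidem : r ∘ r = r) :
    ybCon r ≤ Con.ker (ybPsi r) := by
  apply Con.conGen_le.mpr
  rintro a b ⟨x, y, rfl, rfl⟩
  show ybPsi r _ = ybPsi r _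
  rw [map_mul, map_mul, ybPsi_of, ybPsi_of, ybPsi_of, ybPsi_of]
  show YBAux.mk _ _ = YBAux.mk _ _
  congr 1
  · funext z
    show (r (x, (r (y, z)).1)).1 = (r ((r (x,y)).1, (r ((r (x,y)).2, z)).1)).1
    exact (yb_rawB1 hbr x y z).symm
  · show some ((r (x, y)).1) = some ((r ((r (x,y)).1, (r (x,y)).2)).1)
    rw [Prod.mk.eta]
    exact congrArg _ (congrArg Prod.fst (yb_fix hidem (x, y))).symm

lemma ybPsi_eq_of_con (hbr : IsBraided r) (hidem : r ∘ r = r) {a b : FreeMonoid X}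
    (h : ybCon r a b) : ybPsi r a = ybPsi r b :=
  ybPsi_con hbr hidem h

lemma yb_unique (hbr : IsBraided r) (hlnd : ∀ x : X, Function.Bijective fun y => (r (x, y)).1)
    (hidem : r ∘ r = r) (x₁ : X) (e : ℕ) {x y : X}
    (h : ybCon r (FreeMonoid.of x₁ ^ e * FreeMonoid.of x)
      (FreeMonoid.of x₁ ^ e * FreeMonoid.of y)) : x = y := by
  have := ybPsi_eq_of_con hbr hidem h
  rw [map_mul, map_mul, map_pow] at this
  have ho := congrArg YBAux.o this
  rw [ybPsi_of] at ho
  simp only [YBAux.mul_o] at ho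
  have hinj : Function.Injective ((ybPsi r (FreeMonoid.of x₁)) ^ e).f := by
    apply YBAux.pow_f_inj
    rw [ybPsi_of]
    exact (hlnd x₁).1
  exact hinj (Option.some_injective _ ho)

end YB

section Exist
variable {X : Type*} {r : X × X → X × X}

lemma yb_rel_base (x y : X) :
    ybCon r (FreeMonoid.of x * FreeMonoid.of y)
      (FreeMonoid.of (r (x, y)).1 * FreeMonoid.of (r (x, y)).2) :=
  ConGen.Rel.of _ _ ⟨x, y, rfl, rfl⟩

lemma yb_step (hlnd : ∀ x : X, Function.Bijective fun y => (r (x, y)).1)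
    (hidem : r ∘ r = r) (x₁ y z : X) :
    ∃ t : X, ybCon r (FreeMonoid.of y * FreeMonoid.of z)
      (FreeMonoid.of x₁ * FreeMonoid.of t) := by
  obtain ⟨t, ht⟩ := (hlnd x₁).2 (r (y, z)).1
  refine ⟨t, ?_⟩
  have e1 : (r (x₁, t)).1 = (r (y, z)).1 := ht
  have e2 : (r (x₁, t)).2 = (r (y, z)).2 := yb_snd hlnd hidem e1
  have h2 := yb_rel_base (r := r) x₁ t
  rw [e1, e2] at h2
  exact (ybCon r).trans (yb_rel_base y z) ((ybCon r).symm h2)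

lemma yb_comm (hlnd : ∀ x : X, Function.Bijective fun y => (r (x, y)).1)
    (hidem : r ∘ r = r) (x₁ : X) :
    ∀ (k : ℕ) (a x : X), ∃ x' : X,
      ybCon r (FreeMonoid.of a * FreeMonoid.of x₁ ^ k * FreeMonoid.of x)
        (FreeMonoid.of x₁ ^ (k + 1) * FreeMonoid.of x') := by
  intro k
  induction k with
  | zero =>
    intro a x
    obtain ⟨t, ht⟩ := yb_step hlnd hidem x₁ a x
    exact ⟨t, by simpa using ht⟩
  | succ k ih =>
    intro a x
    obtain ⟨z, hz⟩ := yb_step hlnd hidem x₁ a x₁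
    obtain ⟨x', hx'⟩ := ih z x
    refine ⟨x', ?_⟩
    have h1 : ybCon r
        (FreeMonoid.of a * FreeMonoid.of x₁ ^ (k + 1) * FreeMonoid.of x)
        ((FreeMonoid.of x₁ * FreeMonoid.of z) * (FreeMonoid.of x₁ ^ k * FreeMonoid.of x)) := by
      have : FreeMonoid.of a * FreeMonoid.of x₁ ^ (k + 1) * FreeMonoid.of x
          = (FreeMonoid.of a * FreeMonoid.of x₁) * (FreeMonoid.of x₁ ^ k * FreeMonoid.of x) := by
        rw [pow_succ']
        simp [mul_assoc]
      rw [this]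
      exact (ybCon r).mul hz ((ybCon r).refl _)
    have h2 : ybCon r
        ((FreeMonoid.of x₁ * FreeMonoid.of z) * (FreeMonoid.of x₁ ^ k * FreeMonoid.of x))
        (FreeMonoid.of x₁ * (FreeMonoid.of x₁ ^ (k + 1) * FreeMonoid.of x')) := by
      have h3 : ybCon r (FreeMonoid.of z * (FreeMonoid.of x₁ ^ k * FreeMonoid.of x))
          (FreeMonoid.of x₁ ^ (k + 1) * FreeMonoid.of x') := by
        rw [← mul_assoc]; exact hx'
      have := (ybCon r).mul ((ybCon r).refl (FreeMonoid.of x₁)) h3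
      rw [← mul_assoc] at this
      exact this
    have h4 : FreeMonoid.of x₁ * (FreeMonoid.of x₁ ^ (k + 1) * FreeMonoid.of x')
        = FreeMonoid.of x₁ ^ (k + 1 + 1) * FreeMonoid.of x' := by
      simp [pow_succ', mul_assoc]
    exact (ybCon r).trans h1 (h4 ▸ h2)

lemma yb_exists (hlnd : ∀ x : X, Function.Bijective fun y => (r (x, y)).1)
    (hidem : r ∘ r = r) (x₁ : X) :
    ∀ (l : List X) (a : X), ∃ x : X,
      ybCon r (FreeMonoid.of a * FreeMonoid.ofList l)
        (FreeMonoid.of x₁ ^ l.length * FreeMonoid.of x) := by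
  intro l
  induction l with
  | nil =>
    intro a
    exact ⟨a, by simpa using (ybCon r).refl (FreeMonoid.of a)⟩
  | cons b l ih =>
    intro a
    obtain ⟨y, hy⟩ := ih b
    obtain ⟨x, hx⟩ := yb_comm hlnd hidem x₁ l.length a y
    refine ⟨x, ?_⟩
    have h1 : ybCon r (FreeMonoid.of a * FreeMonoid.ofList (b :: l))
        (FreeMonoid.of a * (FreeMonoid.of x₁ ^ l.length * FreeMonoid.of y)) := by
      rw [FreeMonoid.ofList_cons]
      exact (ybCon r).mul ((ybCon r).refl _) hy
    rw [← mul_assoc] at h1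
    exact (ybCon r).trans h1 (by simpa [List.length_cons] using hx)

end Exist

lemma yb_len_pow {X : Type*} (x₁ : X) (e : ℕ) :
    (FreeMonoid.of x₁ ^ e).length = e := by
  induction e with
  | zero => simp
  | succ e ih => rw [pow_succ, FreeMonoid.length_mul, ih, FreeMonoid.length_of]

/-- Let `(X, r)` be a finite left nondegenerate idempotent braided set with `|X| = n ≥ 2`
and `x₁ ∈ X`. Then for every `d ≥ 1`, every word of length `d` equals `x₁^(d-1) x` in
`S(X, r)` for a unique `x ∈ X`; hence the set `S_d` of classes of words of length `d` has
exactly `n` elements, and the degree-`d` component of the Yang–Baxter algebra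
`A(k, X, r)` has dimension `n` over `k` for all `d ≥ 1` (i.e. its Hilbert series is
`(1 + (n-1)t)/(1-t)`). -/
theorem stmt6 {X : Type*} [Finite X] (r : X × X → X × X)
    (hbr : IsBraided r)
    (hlnd : ∀ x : X, Function.Bijective fun y => (r (x, y)).1)
    (hidem : r ∘ r = r)
    (n : ℕ) (hn : 2 ≤ n) (hcard : Nat.card X = n) (x₁ : X)
    (k : Type*) [Field k] :
    (∀ d : ℕ, 1 ≤ d → ∀ w : FreeMonoid X, w.length = d →
      ∃! x : X, (ybCon r).mk' w
        = (ybCon r).mk' (FreeMonoid.of x₁ ^ (d - 1) * FreeMonoid.of x)) ∧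
    (∀ d : ℕ, 1 ≤ d →
      Nat.card {s : (ybCon r).Quotient //
        ∃ w : FreeMonoid X, w.length = d ∧ (ybCon r).mk' w = s} = n) ∧
    (∀ d : ℕ, 1 ≤ d →
      Module.finrank k (Submodule.span k
        {a : MonoidAlgebra k (ybCon r).Quotient |
          ∃ w : FreeMonoid X, w.length = d ∧
            a = MonoidAlgebra.of k (ybCon r).Quotient ((ybCon r).mk' w)}) = n) := by
  have mainUniq : ∀ (e : ℕ) (x y : X),
      (ybCon r).mk' (FreeMonoid.of x₁ ^ e * FreeMonoid.of x)
        = (ybCon r).mk' (FreeMonoid.of x₁ ^ e * FreeMonoid.of y) → x = y := by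
    intro e x y h
    exact yb_unique hbr hlnd hidem x₁ e ((Con.eq (ybCon r)).mp h)
  have mainEx : ∀ d : ℕ, 1 ≤ d → ∀ w : FreeMonoid X, w.length = d →
      ∃ x : X, (ybCon r).mk' w
        = (ybCon r).mk' (FreeMonoid.of x₁ ^ (d - 1) * FreeMonoid.of x) := by
    intro d hd w hw
    match hl : w.toList with
    | [] =>
      exfalso
      have : w = 1 := FreeMonoid.length_eq_zero.mp (by
        show w.toList.length = 0
        rw [hl]; rfl)
      rw [this] at hw
      simp at hw; omega
    | a :: l =>
      obtain ⟨x, hx⟩ := yb_exists hlnd hidem x₁ l a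
      refine ⟨x, ?_⟩
      have hw' : w = FreeMonoid.of a * FreeMonoid.ofList l := by
        rw [← FreeMonoid.ofList_toList w, hl, FreeMonoid.ofList_cons]
      have hlen : l.length = d - 1 := by
        have h1 : w.length = l.length + 1 := by
          show w.toList.length = l.length + 1
          rw [hl]; rfl
        omega
      rw [hw', ← hlen]
      exact (Con.eq (ybCon r)).mpr hx
  have part1 : ∀ d : ℕ, 1 ≤ d → ∀ w : FreeMonoid X, w.length = d →
      ∃! x : X, (ybCon r).mk' w
        = (ybCon r).mk' (FreeMonoid.of x₁ ^ (d - 1) * FreeMonoid.of x) := by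
    intro d hd w hw
    obtain ⟨x, hx⟩ := mainEx d hd w hw
    exact ⟨x, hx, fun y hy => mainUniq (d - 1) y x (hy.symm.trans hx)⟩
  have hlen2 : ∀ (d : ℕ), 1 ≤ d → ∀ x : X,
      (FreeMonoid.of x₁ ^ (d - 1) * FreeMonoid.of x).length = d := by
    intro d hd x
    rw [FreeMonoid.length_mul, yb_len_pow, FreeMonoid.length_of]
    omega
  -- the bijection X → S_d
  have part2 : ∀ d : ℕ, 1 ≤ d →
      Nat.card {s : (ybCon r).Quotient //
        ∃ w : FreeMonoid X, w.length = d ∧ (ybCon r).mk' w = s} = n := by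
    intro d hd
    set S := {s : (ybCon r).Quotient //
        ∃ w : FreeMonoid X, w.length = d ∧ (ybCon r).mk' w = s}
    have hbij : Function.Bijective (fun x : X =>
        (⟨(ybCon r).mk' (FreeMonoid.of x₁ ^ (d - 1) * FreeMonoid.of x),
          ⟨_, hlen2 d hd x, rfl⟩⟩ : S)) := by
      constructor
      · intro x y h
        exact mainUniq (d - 1) x y (congrArg Subtype.val h)
      · rintro ⟨s, w, hwl, rfl⟩
        obtain ⟨x, hx⟩ := mainEx d hd w hwl
        exact ⟨x, Subtype.ext hx.symm⟩
    rw [← hcard]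
    exact (Nat.card_eq_of_bijective _ hbij).symm
  refine ⟨part1, part2, ?_⟩
  intro d hd
  have := Fintype.ofFinite X
  set Q := (ybCon r).Quotient
  set f : X → Q := fun x => (ybCon r).mk' (FreeMonoid.of x₁ ^ (d - 1) * FreeMonoid.of x)
    with hf
  have finj : Function.Injective f := fun x y h => mainUniq (d - 1) x y h
  have hli : LinearIndependent k (fun x : X => MonoidAlgebra.of k Q (f x)) := by
    have h1 : LinearIndependent k (fun g : Q => (MonoidAlgebra.of k Q) g) := by
      have hb := (MonoidAlgebra.basis Q k).linearIndependent
      exact hb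
    exact h1.comp f finj
  have hset : {a : MonoidAlgebra k Q |
        ∃ w : FreeMonoid X, w.length = d ∧
          a = MonoidAlgebra.of k Q ((ybCon r).mk' w)}
      = Set.range (fun x : X => MonoidAlgebra.of k Q (f x)) := by
    ext a
    constructor
    · rintro ⟨w, hwl, rfl⟩
      obtain ⟨x, hx⟩ := mainEx d hd w hwl
      exact ⟨x, by rw [hx]⟩
    · rintro ⟨x, rfl⟩
      exact ⟨FreeMonoid.of x₁ ^ (d - 1) * FreeMonoid.of x, hlen2 d hd x, rfl⟩
  rw [hset, finrank_span_eq_card hli, ← Nat.card_eq_fintype_card, hcard]
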